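/- For real n×n matrices A, E, Z, T ≥ 0, and X the solution of A X + X A^T = -Z, the trace of E^T E (X - e^{AT} X e^{A^T T}) equals the trace of Z (Y - e^{A^T T} Y e^{A T}), where Y solves A^T Y + Y A = -E^T E. (Duality of the finite-horizon trace formula.) -/

import Mathlib

open Matrix NormedSpace

/-- duality of the finite-horizon trace formula. -/
theorem stmt3 {n : ℕ} (A E Z : Matrix (Fin n) (Fin n) ℝ) (T : ℝ) (hT : 0 ≤ T)
    (X Y : Matrix (Fin n) (Fin n) ℝ)
    (hX : A * X + X * Aᵀ = -Z) (hY : Aᵀ * Y + Y * A = -(Eᵀ * E)) :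
    (Eᵀ * E * (X - exp (T • A) * X * exp (T • Aᵀ))).trace
      = (Z * (Y - exp (T • Aᵀ) * Y * exp (T • A))).trace := by
  have hE : Eᵀ * E = -(Aᵀ * Y + Y * A) := by rw [hY, neg_neg]
  have hZ : Z = -(A * X + X * Aᵀ) := by rw [hX, neg_neg]
  set F := exp (T • A) with hF
  have hFt : exp (T • Aᵀ) = Fᵀ := by
    rw [hF, ← Matrix.transpose_smul, Matrix.exp_transpose]
  have hcomm : F * A = A * F :=
    ((((Commute.refl A).smul_left T).exp_left).symm.eq).symm
  have hcommT : Fᵀ * Aᵀ = Aᵀ * Fᵀ := by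
    rw [← Matrix.transpose_mul, ← Matrix.transpose_mul, hcomm]
  have e0a : (Aᵀ * Y * X).trace = (X * Aᵀ * Y).trace :=
    Matrix.trace_mul_cycle Aᵀ Y X
  have e0b : (Y * A * X).trace = (A * X * Y).trace :=
    (Matrix.trace_mul_cycle A X Y).symm
  have e1 : (Aᵀ * Y * (F * X * Fᵀ)).trace = (X * Aᵀ * (Fᵀ * Y * F)).trace := by
    calc (Aᵀ * Y * (F * X * Fᵀ)).trace
        = ((F * X * Fᵀ) * (Aᵀ * Y)).trace := Matrix.trace_mul_comm _ _
      _ = (F * (X * (Aᵀ * Fᵀ) * Y)).trace := by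
          rw [show (F * X * Fᵀ) * (Aᵀ * Y) = F * (X * (Fᵀ * Aᵀ) * Y) by
                noncomm_ring, hcommT]
      _ = ((X * (Aᵀ * Fᵀ) * Y) * F).trace := Matrix.trace_mul_comm _ _
      _ = (X * Aᵀ * (Fᵀ * Y * F)).trace := by
          rw [show (X * (Aᵀ * Fᵀ) * Y) * F = X * Aᵀ * (Fᵀ * Y * F) by noncomm_ring]
  have e2 : (Y * A * (F * X * Fᵀ)).trace = (A * X * (Fᵀ * Y * F)).trace := by
    calc (Y * A * (F * X * Fᵀ)).trace
        = (Y * (F * A) * (X * Fᵀ)).trace := by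
          rw [show Y * A * (F * X * Fᵀ) = Y * (A * F) * (X * Fᵀ) by noncomm_ring,
            ← hcomm]
      _ = ((A * (X * Fᵀ)) * (Y * F)).trace := by
          rw [show Y * (F * A) * (X * Fᵀ) = (Y * F) * (A * (X * Fᵀ)) by noncomm_ring,
            Matrix.trace_mul_comm]
      _ = (A * X * (Fᵀ * Y * F)).trace := by
          rw [show (A * (X * Fᵀ)) * (Y * F) = A * X * (Fᵀ * Y * F) by noncomm_ring]
  simp only [Matrix.mul_sub, Matrix.trace_sub, hFt, hE, hZ, Matrix.neg_mul,
    Matrix.add_mul, Matrix.trace_neg, Matrix.trace_add]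
  linarith [e0a, e0b, e1, e2]
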